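/- In a symmetric monoidal category C satisfying: (i) every object X carries a uniform cocommutative comonoid structure (δ_X : X ⟶ X ⊗ X, ε_X : X ⟶ I), (ii) every morphism f : X ⟶ I equals ε_X, and (iii) every morphism f : X ⟶ Y₁ ⊗ Y₂ factors as f = δ_X ≫ (f₁ ⊗ f₂) for some f₁, f₂ — the components of any such splitting are forced: whenever f = δ_X ≫ (f₁ ⊗ f₂) with f₁ : X ⟶ Y₁ and f₂ : X ⟶ Y₂, necessarily f₁ = f ≫ (𝟙_{Y₁} ⊗ ε_{Y₂}) ≫ (right unitor) and f₂ = f ≫ (ε_{Y₁} ⊗ 𝟙_{Y₂}) ≫ (left unitor). Consequently the comultiplications are natural: for every g : X ⟶ Y, g ≫ δ_Y = δ_X ≫ (g ⊗ g). -/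

import Mathlib

open CategoryTheory MonoidalCategory

/-- In a symmetric monoidal category where every object carries a uniform
cocommutative comonoid structure, every morphism into the unit is the counit,
and every joint morphism splits, the components of any splitting of
`f : X ⟶ Y₁ ⊗ Y₂` are forced to be the corresponding marginals of `f`;
consequently the comultiplications are natural. -/
theorem splitting_components_forced_and_copy_natural
    {C : Type*} [Category C] [MonoidalCategory C] [SymmetricCategory C]
    (δ : ∀ X : C, X ⟶ X ⊗ X) (ε : ∀ X : C, X ⟶ 𝟙_ C)
    (coassoc : ∀ X : C, δ X ≫ (δ X ⊗ₘ 𝟙 X) ≫ (α_ X X X).hom = δ X ≫ (𝟙 X ⊗ₘ δ X))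
    (counit_left : ∀ X : C, δ X ≫ (ε X ⊗ₘ 𝟙 X) ≫ (λ_ X).hom = 𝟙 X)
    (counit_right : ∀ X : C, δ X ≫ (𝟙 X ⊗ₘ ε X) ≫ (ρ_ X).hom = 𝟙 X)
    (cocomm : ∀ X : C, δ X ≫ (β_ X X).hom = δ X)
    (uniform_δ : ∀ X Y : C, δ (X ⊗ Y) = (δ X ⊗ₘ δ Y) ≫ tensorμ X X Y Y)
    (uniform_ε : ∀ X Y : C, ε (X ⊗ Y) = (ε X ⊗ₘ ε Y) ≫ (λ_ (𝟙_ C)).hom)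
    (δ_unit : δ (𝟙_ C) = (λ_ (𝟙_ C)).inv)
    (ε_unit : ε (𝟙_ C) = 𝟙 (𝟙_ C))
    (discard_unique : ∀ (X : C) (f : X ⟶ 𝟙_ C), f = ε X)
    (split : ∀ (X Y₁ Y₂ : C) (f : X ⟶ Y₁ ⊗ Y₂),
      ∃ (f₁ : X ⟶ Y₁) (f₂ : X ⟶ Y₂), f = δ X ≫ (f₁ ⊗ₘ f₂)) :
    (∀ (X Y₁ Y₂ : C) (f : X ⟶ Y₁ ⊗ Y₂) (f₁ : X ⟶ Y₁) (f₂ : X ⟶ Y₂),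
      f = δ X ≫ (f₁ ⊗ₘ f₂) →
        f₁ = f ≫ (𝟙 Y₁ ⊗ₘ ε Y₂) ≫ (ρ_ Y₁).hom ∧
        f₂ = f ≫ (ε Y₁ ⊗ₘ 𝟙 Y₂) ≫ (λ_ Y₂).hom) ∧
    (∀ (X Y : C) (g : X ⟶ Y), g ≫ δ Y = δ X ≫ (g ⊗ₘ g)) := by
  have marg : ∀ (X Y₁ Y₂ : C) (f₁ : X ⟶ Y₁) (f₂ : X ⟶ Y₂),
      (δ X ≫ (f₁ ⊗ₘ f₂)) ≫ (𝟙 Y₁ ⊗ₘ ε Y₂) ≫ (ρ_ Y₁).hom = f₁ ∧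
      (δ X ≫ (f₁ ⊗ₘ f₂)) ≫ (ε Y₁ ⊗ₘ 𝟙 Y₂) ≫ (λ_ Y₂).hom = f₂ := by
    intro X Y₁ Y₂ f₁ f₂
    have h1 : f₁ ≫ ε Y₁ = ε X := discard_unique X _
    have h2 : f₂ ≫ ε Y₂ = ε X := discard_unique X _
    constructor
    · have key : (f₁ ⊗ₘ f₂) ≫ (𝟙 Y₁ ⊗ₘ ε Y₂) ≫ (ρ_ Y₁).hom
          = (𝟙 X ⊗ₘ ε X) ≫ (ρ_ X).hom ≫ f₁ := by
        rw [← Category.assoc, tensorHom_comp_tensorHom, Category.comp_id, h2,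
          show (f₁ ⊗ₘ ε X) = (𝟙 X ⊗ₘ ε X) ≫ (f₁ ⊗ₘ 𝟙 (𝟙_ C)) by
            rw [tensorHom_comp_tensorHom]; simp,
          Category.assoc, tensorHom_id, rightUnitor_naturality]
      rw [Category.assoc, key,
        show δ X ≫ (𝟙 X ⊗ₘ ε X) ≫ (ρ_ X).hom ≫ f₁
          = (δ X ≫ (𝟙 X ⊗ₘ ε X) ≫ (ρ_ X).hom) ≫ f₁ by simp,
        counit_right, Category.id_comp]
    · have key : (f₁ ⊗ₘ f₂) ≫ (ε Y₁ ⊗ₘ 𝟙 Y₂) ≫ (λ_ Y₂).hom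
          = (ε X ⊗ₘ 𝟙 X) ≫ (λ_ X).hom ≫ f₂ := by
        rw [← Category.assoc, tensorHom_comp_tensorHom, Category.comp_id, h1,
          show (ε X ⊗ₘ f₂) = (ε X ⊗ₘ 𝟙 X) ≫ (𝟙 (𝟙_ C) ⊗ₘ f₂) by
            rw [tensorHom_comp_tensorHom]; simp,
          Category.assoc, id_tensorHom, leftUnitor_naturality]
      rw [Category.assoc, key,
        show δ X ≫ (ε X ⊗ₘ 𝟙 X) ≫ (λ_ X).hom ≫ f₂
          = (δ X ≫ (ε X ⊗ₘ 𝟙 X) ≫ (λ_ X).hom) ≫ f₂ by simp,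
        counit_left, Category.id_comp]
  refine ⟨fun X Y₁ Y₂ f f₁ f₂ hf => ?_, fun X Y g => ?_⟩
  · subst hf; exact ⟨(marg X Y₁ Y₂ f₁ f₂).1.symm, (marg X Y₁ Y₂ f₁ f₂).2.symm⟩
  · obtain ⟨f₁, f₂, hf⟩ := split X Y Y (g ≫ δ Y)
    have e1 : f₁ = g := by
      have h := (marg X Y Y f₁ f₂).1
      rw [← hf, Category.assoc, counit_right, Category.comp_id] at h
      exact h.symm
    have e2 : f₂ = g := by
      have h := (marg X Y Y f₁ f₂).2
      rw [← hf, Category.assoc, counit_left, Category.comp_id] at h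
      exact h.symm
    rw [hf, e1, e2]
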